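/- Let Ω ⊂ ℂᵐ be a bounded domain, ψ : 𝔹^q → ℂᵐ holomorphic with ψ'(0) injective and x + tv + ψ(ε𝔹^q) ⊂ Ω for all t ∈ (0,δ], where x = ψ(0) ∈ ∂Ω and v is a unit vector. Let ζₙ = x + tₙ v with tₙ ↓ 0, and let Φₙ : 𝔹ᵐ → Ω be holomorphic embeddings with Φₙ(0) = ζₙ such that Φₙ'(0) preserves the subspace ℂ^q × {0} = ψ'(0)ℂ^q, and suppose k_Ω(ζₙ; Φₙ'(0)X) ≥ ε₂‖X‖ for all X ∈ ℂᵐ and some ε₂ > 0. Then there exists C > 1 with (1/C)‖X‖ ≤ ‖Φₙ'(0)X‖ ≤ C‖X‖ for all n ≥ 1 and all X ∈ ℂ^q × {0}. -/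

import Mathlib

open Metric Set Complex Filter MeasureTheory
open scoped Manifold Topology ENNReal NNReal
noncomputable section
/-- Euclidean complex m-space. -/
abbrev ESp (m : ℕ) := EuclideanSpace ℂ (Fin m)

instance {m : ℕ} : MeasurableSpace (ESp m) := borel _
instance {m : ℕ} : BorelSpace (ESp m) := ⟨rfl⟩
noncomputable instance {m : ℕ} : MeasureTheory.MeasureSpace (ESp m) :=
  { volume := MeasureTheory.Measure.map (WithLp.equiv 2 (Fin m → ℂ)).symm MeasureTheory.volume }

section Domain
variable {m : ℕ}

/-- The infinitesimal Kobayashi metric of a domain Ω ⊆ ℂ^m. -/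
def kobD (Ω : Set (ESp m)) (z X : ESp m) : ℝ :=
  sInf { c : ℝ | ∃ (ξ : ℂ) (g : ℂ → ESp m), DifferentiableOn ℂ g (ball 0 1) ∧
    MapsTo g (ball 0 1) Ω ∧ g 0 = z ∧ ξ • deriv g 0 = X ∧ c = ‖ξ‖ }

end Domain



/-- Uniform two-sided bounds on Φₙ'(0) along the tangential directions of an analytic disk in
the boundary. -/
theorem stmt19 (m q : ℕ) (hqm : q ≤ m) (Ω : Set (ESp m)) (hΩop : IsOpen Ω)
    (hΩbd : Bornology.IsBounded Ω) (hΩne : Ω.Nonempty)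
    (S : Set (ESp m)) (hS : S = {X : ESp m | ∀ i : Fin m, q ≤ (i : ℕ) → X i = 0})
    (ψ : ESp q → ESp m) (hψ : DifferentiableOn ℂ ψ (ball 0 1))
    (hψ' : Function.Injective (fderiv ℂ ψ 0)) (hrange : range (fderiv ℂ ψ 0) = S)
    (x : ESp m) (hx : x = ψ 0) (hxbd : x ∈ frontier Ω)
    (v : ESp m) (hv : ‖v‖ = 1) (ε δ : ℝ) (hε : 0 < ε) (hδ : 0 < δ)
    (hdisk : ∀ t ∈ Ioc (0:ℝ) δ, ∀ u ∈ ball (0 : ESp q) 1, t • v + ψ (ε • u) ∈ Ω)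
    (t : ℕ → ℝ) (ht : ∀ n, t n ∈ Ioc (0:ℝ) δ) (htanti : Antitone t)
    (htlim : Filter.Tendsto t atTop (𝓝 (0:ℝ)))
    (ζ : ℕ → ESp m) (hζ : ∀ n, ζ n = x + t n • v)
    (Φ : ℕ → ESp m → ESp m)
    (hΦholo : ∀ n, DifferentiableOn ℂ (Φ n) (ball 0 1))
    (hΦmaps : ∀ n, MapsTo (Φ n) (ball (0 : ESp m) 1) Ω)
    (hΦinj : ∀ n, InjOn (Φ n) (ball (0 : ESp m) 1))
    (hΦ0 : ∀ n, Φ n 0 = ζ n)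
    (hΦpres : ∀ n, (fderiv ℂ (Φ n) 0) '' S = S)
    (ε₂ : ℝ) (hε₂ : 0 < ε₂)
    (hkob : ∀ n, ∀ X : ESp m, ε₂ * ‖X‖ ≤ kobD Ω (ζ n) (fderiv ℂ (Φ n) 0 X)) :
    ∃ C > (1:ℝ), ∀ n, ∀ X ∈ S,
      (1 / C) * ‖X‖ ≤ ‖fderiv ℂ (Φ n) 0 X‖ ∧ ‖fderiv ℂ (Φ n) 0 X‖ ≤ C * ‖X‖ := by
  classical
  obtain ⟨R, hRΩ⟩ := hΩbd.subset_closedBall 0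
  have hR0 : 0 ≤ R := by
    obtain ⟨y, hy⟩ := hΩne
    exact dist_nonneg.trans (hRΩ hy)
  set A := fderiv ℂ ψ 0 with hAdef
  obtain ⟨K, hK0, hK⟩ := A.toLinearMap.exists_antilipschitzWith (LinearMap.ker_eq_bot.mpr hψ')
  set r : ℝ := (max ε 1)⁻¹ with hrdef
  have hmax1 : (1:ℝ) ≤ max ε 1 := le_max_right _ _
  have hmaxpos : (0:ℝ) < max ε 1 := lt_of_lt_of_le one_pos hmax1
  have hr0 : 0 < r := inv_pos.mpr hmaxpos
  have hεr0 : 0 < ε * r := mul_pos hε hr0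
  have hεr1 : ε * r ≤ 1 := by
    rw [hrdef, mul_inv_le_iff₀ hmaxpos, one_mul]
    exact le_max_left _ _
  have hr1 : r ≤ 1 := by
    rw [hrdef]
    exact inv_le_one_of_one_le₀ hmax1
  -- ζ n ∈ Ω
  have hζΩ : ∀ n, ζ n ∈ Ω := by
    intro n
    have h0 : (0 : ESp q) ∈ ball (0:ESp q) 1 := mem_ball_self one_pos
    have := hdisk (t n) (ht n) 0 h0
    rw [smul_zero, ← hx] at this
    rw [hζ n, add_comm]
    exact this
  have hψ0 : HasFDerivAt ψ A 0 :=
    (hψ.differentiableAt (isOpen_ball.mem_nhds (mem_ball_self one_pos))).hasFDerivAt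
  set C₁ : ℝ := 2 * R + 1 with hC₁def
  have hC₁ : 0 < C₁ := by positivity
  -- Upper bound via the Schwarz lemma
  have hupper : ∀ n (X : ESp m), ‖fderiv ℂ (Φ n) 0 X‖ ≤ C₁ * ‖X‖ := by
    intro n X
    rcases eq_or_ne X 0 with h0 | h0
    · simp [h0]
    set B := fderiv ℂ (Φ n) 0 with hBdef
    have hBd : HasFDerivAt (Φ n) B 0 :=
      ((hΦholo n).differentiableAt (isOpen_ball.mem_nhds (mem_ball_self one_pos))).hasFDerivAt
    set u : ESp m := ‖X‖⁻¹ • X with hu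
    have hXn : ‖X‖ ≠ 0 := norm_ne_zero_iff.mpr h0
    have hun : ‖u‖ = 1 := by
      rw [hu, norm_smul, norm_inv, norm_norm, inv_mul_cancel₀ hXn]
    set g : ℂ → ESp m := fun τ => Φ n (τ • u) with hg
    have hmem : ∀ τ : ℂ, τ ∈ ball (0:ℂ) 1 → τ • u ∈ ball (0:ESp m) 1 := by
      intro τ hτ
      simp only [mem_ball, dist_zero_right] at *
      rw [norm_smul, hun, mul_one]
      exact hτ
    have hgd : DifferentiableOn ℂ g (ball 0 1) := by
      intro τ hτ
      have h1 : DifferentiableAt ℂ (Φ n) (τ • u) :=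
        (hΦholo n).differentiableAt (isOpen_ball.mem_nhds (hmem τ hτ))
      have h2 : DifferentiableAt ℂ (fun τ : ℂ => τ • u) τ :=
        ((hasDerivAt_id τ).smul_const u).differentiableAt
      exact (h1.comp τ h2).differentiableWithinAt
    have hg0 : g 0 = ζ n := by
      rw [hg]
      simp only [zero_smul]
      exact hΦ0 n
    have hgmaps : MapsTo g (ball 0 1) (ball (g 0) C₁) := by
      intro τ hτ
      have hgΩ : g τ ∈ Ω := hΦmaps n (hmem τ hτ)
      have hg0Ω : g 0 ∈ Ω := hg0 ▸ hζΩ n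
      have h1 := hRΩ hgΩ
      have h2 := hRΩ hg0Ω
      rw [mem_closedBall] at h1 h2
      rw [mem_ball]
      calc dist (g τ) (g 0) ≤ dist (g τ) 0 + dist 0 (g 0) := dist_triangle _ _ _
        _ = dist (g τ) 0 + dist (g 0) 0 := by rw [dist_comm 0]
        _ ≤ R + R := add_le_add h1 h2
        _ < C₁ := by rw [hC₁def]; linarith
    have hder : HasDerivAt g (B u) 0 := by
      have hl : HasDerivAt (fun τ : ℂ => τ • u) u 0 := by
        simpa using (hasDerivAt_id (0:ℂ)).smul_const u
      have hB0 : HasFDerivAt (Φ n) B ((0:ℂ) • u) := by rwa [zero_smul]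
      exact hB0.comp_hasDerivAt 0 hl
    have hSchwarz : ‖deriv g 0‖ ≤ C₁ / 1 :=
      Complex.norm_deriv_le_div_of_mapsTo_ball hgd (hgmaps.mono_right ball_subset_closedBall) one_pos
    rw [hder.deriv] at hSchwarz
    have hBu : B u = ‖X‖⁻¹ • B X := by rw [hu, B.map_smul_of_tower]
    rw [hBu, norm_smul, norm_inv, norm_norm, div_one] at hSchwarz
    calc ‖B X‖ = ‖X‖ * (‖X‖⁻¹ * ‖B X‖) := by field_simp
      _ ≤ ‖X‖ * C₁ := by
          apply mul_le_mul_of_nonneg_left hSchwarz (norm_nonneg X)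
      _ = C₁ * ‖X‖ := mul_comm _ _
  -- Upper bound on the Kobayashi metric in directions of S, via the analytic disk
  have hbdd : ∀ z X : ESp m, BddBelow { c : ℝ | ∃ (ξ : ℂ) (g : ℂ → ESp m),
      DifferentiableOn ℂ g (ball 0 1) ∧ MapsTo g (ball 0 1) Ω ∧ g 0 = z ∧
      ξ • deriv g 0 = X ∧ c = ‖ξ‖ } := by
    intro z X
    refine ⟨0, fun c hc => ?_⟩
    obtain ⟨ξ, g, _, _, _, _, rfl⟩ := hc
    exact norm_nonneg _
  have hkub : ∀ n, ∀ Y ∈ S, kobD Ω (ζ n) Y ≤ (K / (ε * r)) * ‖Y‖ := by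
    intro n Y hY
    rw [← hrange] at hY
    obtain ⟨w, hw⟩ := hY
    rcases eq_or_ne w 0 with h0 | h0
    · have hY0 : Y = 0 := by rw [← hw, h0, map_zero]
      have hle : kobD Ω (ζ n) Y ≤ 0 := by
        apply csInf_le (hbdd _ _)
        exact ⟨0, fun _ => ζ n, differentiableOn_const _, fun τ _ => hζΩ n, rfl,
          by rw [zero_smul, hY0], by simp⟩
      rw [hY0] at hle ⊢
      simpa using hle
    · have hwn : ‖w‖ ≠ 0 := norm_ne_zero_iff.mpr h0
      set u : ESp q := ‖w‖⁻¹ • w with hu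
      have hun : ‖u‖ = 1 := by
        rw [hu, norm_smul, norm_inv, norm_norm, inv_mul_cancel₀ hwn]
      set g : ℂ → ESp m := fun τ => t n • v + ψ ((ε * r) • (τ • u)) with hg
      have hmem1 : ∀ τ : ℂ, τ ∈ ball (0:ℂ) 1 → (ε * r) • (τ • u) ∈ ball (0:ESp q) 1 := by
        intro τ hτ
        simp only [mem_ball, dist_zero_right] at *
        rw [norm_smul, norm_smul, hun, mul_one, Real.norm_eq_abs, abs_of_pos hεr0]
        calc (ε * r) * ‖τ‖ ≤ 1 * ‖τ‖ := by
              apply mul_le_mul_of_nonneg_right hεr1 (norm_nonneg _)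
          _ = ‖τ‖ := one_mul _
          _ < 1 := hτ
      have hmem2 : ∀ τ : ℂ, τ ∈ ball (0:ℂ) 1 → r • (τ • u) ∈ ball (0:ESp q) 1 := by
        intro τ hτ
        simp only [mem_ball, dist_zero_right] at *
        rw [norm_smul, norm_smul, hun, mul_one, Real.norm_eq_abs, abs_of_pos hr0]
        calc r * ‖τ‖ ≤ 1 * ‖τ‖ := by
              apply mul_le_mul_of_nonneg_right hr1 (norm_nonneg _)
          _ = ‖τ‖ := one_mul _
          _ < 1 := hτ
      have hgd : DifferentiableOn ℂ g (ball 0 1) := by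
        intro τ hτ
        have h1 : DifferentiableAt ℂ ψ ((ε * r) • (τ • u)) :=
          hψ.differentiableAt (isOpen_ball.mem_nhds (hmem1 τ hτ))
        have h2 : DifferentiableAt ℂ (fun τ : ℂ => (ε * r) • (τ • u)) τ :=
          (((hasDerivAt_id τ).smul_const u).const_smul (ε * r)).differentiableAt
        exact ((h1.comp τ h2).const_add _).differentiableWithinAt
      have hgmaps : MapsTo g (ball 0 1) Ω := by
        intro τ hτ
        have := hdisk (t n) (ht n) (r • (τ • u)) (hmem2 τ hτ)
        rw [hg]
        simp only []
        rw [mul_smul]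
        exact this
      have hg0 : g 0 = ζ n := by
        rw [hg]
        simp only [zero_smul, smul_zero]
        rw [← hx, hζ n, add_comm]
      have hder : HasDerivAt g (A ((ε * r) • u)) 0 := by
        have hl : HasDerivAt (fun τ : ℂ => (ε * r) • (τ • u)) ((ε * r) • u) 0 := by
          have := ((hasDerivAt_id (0:ℂ)).smul_const u).const_smul (ε * r)
          simpa only [id_eq, one_smul, Pi.smul_def] using this
        have hψ0' : HasFDerivAt ψ A ((ε * r) • ((0:ℂ) • u)) := by
          rwa [zero_smul, smul_zero]
        exact (hψ0'.comp_hasDerivAt 0 hl).const_add _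
      set ξ : ℂ := ((‖w‖ / (ε * r) : ℝ) : ℂ) with hξ
      have hsc : ξ • deriv g 0 = Y := by
        rw [hder.deriv, ← A.map_smul]
        rw [← hw]
        congr 1
        rw [hu]
        rw [← Complex.coe_smul (ε * r), ← Complex.coe_smul ‖w‖⁻¹, hξ]
        rw [smul_smul, smul_smul]
        rw [← Complex.ofReal_mul, ← Complex.ofReal_mul]
        have : ‖w‖ / (ε * r) * (ε * r) * ‖w‖⁻¹ = 1 := by
          field_simp
        rw [this, Complex.ofReal_one, one_smul]
      have hle : kobD Ω (ζ n) Y ≤ ‖w‖ / (ε * r) := by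
        apply csInf_le (hbdd _ _)
        refine ⟨ξ, g, hgd, hgmaps, hg0, hsc, ?_⟩
        rw [hξ, Complex.norm_real, Real.norm_eq_abs, _root_.abs_of_nonneg (by positivity)]
      have hwY : ‖w‖ ≤ K * ‖Y‖ := by
        have := hK.le_mul_dist w 0
        simpa [dist_eq_norm, hw] using this
      calc kobD Ω (ζ n) Y ≤ ‖w‖ / (ε * r) := hle
        _ ≤ (K * ‖Y‖) / (ε * r) := by gcongr
        _ = (K / (ε * r)) * ‖Y‖ := by ring
  -- Assemble
  set C : ℝ := max C₁ ((K : ℝ) / (ε₂ * (ε * r))) + 1 with hCdef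
  have hC1 : (1:ℝ) < C := by
    have : (0:ℝ) < max C₁ ((K : ℝ) / (ε₂ * (ε * r))) := lt_of_lt_of_le hC₁ (le_max_left _ _)
    rw [hCdef]; linarith
  have hCpos : (0:ℝ) < C := lt_trans one_pos hC1
  refine ⟨C, hC1, fun n X hX => ?_⟩
  constructor
  · -- lower bound
    have hYS : fderiv ℂ (Φ n) 0 X ∈ S := by
      rw [← hΦpres n]
      exact ⟨X, hX, rfl⟩
    have h1 : ε₂ * ‖X‖ ≤ (K / (ε * r)) * ‖fderiv ℂ (Φ n) 0 X‖ :=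
      le_trans (hkob n X) (hkub n _ hYS)
    have h2 : ‖X‖ ≤ ((K : ℝ) / (ε₂ * (ε * r))) * ‖fderiv ℂ (Φ n) 0 X‖ := by
      rw [div_mul_eq_mul_div, le_div_iff₀ (by positivity)]
      calc ‖X‖ * (ε₂ * (ε * r)) = (ε₂ * ‖X‖) * (ε * r) := by ring
        _ ≤ ((K / (ε * r)) * ‖fderiv ℂ (Φ n) 0 X‖) * (ε * r) := by
            apply mul_le_mul_of_nonneg_right h1 hεr0.le
        _ = (K : ℝ) * ‖fderiv ℂ (Φ n) 0 X‖ := by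
            field_simp
    have h3 : ‖X‖ ≤ C * ‖fderiv ℂ (Φ n) 0 X‖ := by
      calc ‖X‖ ≤ ((K : ℝ) / (ε₂ * (ε * r))) * ‖fderiv ℂ (Φ n) 0 X‖ := h2
        _ ≤ C * ‖fderiv ℂ (Φ n) 0 X‖ := by
            apply mul_le_mul_of_nonneg_right _ (norm_nonneg _)
            rw [hCdef]
            exact le_trans (le_max_right _ _) (by linarith)
    rw [div_mul_eq_mul_div, div_le_iff₀ hCpos, one_mul]
    calc ‖X‖ ≤ C * ‖fderiv ℂ (Φ n) 0 X‖ := h3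
      _ = ‖fderiv ℂ (Φ n) 0 X‖ * C := mul_comm _ _
  · -- upper bound
    calc ‖fderiv ℂ (Φ n) 0 X‖ ≤ C₁ * ‖X‖ := hupper n X
      _ ≤ C * ‖X‖ := by
          apply mul_le_mul_of_nonneg_right _ (norm_nonneg _)
          rw [hCdef]
          exact le_trans (le_max_left _ _) (by linarith)
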